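/- Let n ∈ ℕ. Consider ℝⁿ as the commutative ℝ-algebra Fin n → ℝ with pointwise operations, with submodule multiplication S * T = span{s·t | s ∈ S, t ∈ T}, and let D be the submodule {a : Fin n → ℝ | ∑ᵢ a i = 0}. Define S° = sSup {T | T * S ≤ D} for each submodule S. Then (S°)° = S for every submodule S of Fin n → ℝ; that is, D is a dualizing element of the quantale of submodules of ℝⁿ. -/

import Mathlib

/-- For submodules of `ℝⁿ = Fin n → ℝ` (with submodule multiplication
`S * T = span {s·t | s ∈ S, t ∈ T}`) and `D` the submodule of vectors with
coordinate sum zero, the linear negation `S° = sSup {T | T * S ≤ D}` satisfies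
`(S°)° = S`; that is, `D` is a dualizing element of the quantale of submodules. -/
theorem sum_zero_submodule_is_dualizing (n : ℕ)
    (hmul : ∀ S T : Submodule ℝ (Fin n → ℝ),
      S * T = Submodule.span ℝ {p | ∃ s ∈ S, ∃ t ∈ T, p = s * t})
    (D : Submodule ℝ (Fin n → ℝ))
    (hD : ∀ a : Fin n → ℝ, a ∈ D ↔ ∑ i, a i = 0) :
    ∀ S : Submodule ℝ (Fin n → ℝ),
      sSup {T : Submodule ℝ (Fin n → ℝ) |
        T * sSup {T' : Submodule ℝ (Fin n → ℝ) | T' * S ≤ D} ≤ D} = S := by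
  classical
  set e := (WithLp.linearEquiv 2 ℝ (Fin n → ℝ)) with he
  have key : ∀ S T : Submodule ℝ (Fin n → ℝ),
      T * S ≤ D ↔ ∀ t ∈ T, ∀ s ∈ S, ∑ i, t i * s i = 0 := by
    intro S T
    rw [hmul, Submodule.span_le]
    constructor
    · intro h t ht s hs
      have := h ⟨t, ht, s, hs, rfl⟩
      rw [SetLike.mem_coe, hD] at this
      simpa using this
    · rintro h p ⟨t, ht, s, hs, rfl⟩
      rw [SetLike.mem_coe, hD]
      simpa using h t ht s hs
  have inner_eq : ∀ x y : EuclideanSpace ℝ (Fin n),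
      (inner ℝ x y : ℝ) = ∑ i, x i * y i := by
    intro x y
    simp [PiLp.inner_apply, RCLike.inner_apply, mul_comm]
  have main : ∀ S : Submodule ℝ (Fin n → ℝ),
      sSup {T : Submodule ℝ (Fin n → ℝ) | T * S ≤ D} =
        Submodule.map (e : WithLp 2 (Fin n → ℝ) →ₗ[ℝ] Fin n → ℝ) ((Submodule.comap (e : WithLp 2 (Fin n → ℝ) →ₗ[ℝ] Fin n → ℝ) S)ᗮ) := by
    intro S
    apply le_antisymm
    · apply sSup_le
      intro T hT
      rw [Set.mem_setOf_eq, key] at hT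
      intro t ht
      refine ⟨e.symm t, ?_, by simp⟩
      rw [SetLike.mem_coe, Submodule.mem_orthogonal]
      intro s hs
      rw [inner_eq]
      have h2 := hT t ht (e s) (by simpa using hs)
      simpa [mul_comm, e] using h2
    · apply le_sSup
      rw [Set.mem_setOf_eq, key]
      rintro t ⟨u, hu, rfl⟩ s hs
      rw [SetLike.mem_coe, Submodule.mem_orthogonal] at hu
      have h2 := hu (e.symm s) (by simpa using hs)
      rw [inner_eq] at h2
      simpa [mul_comm, e] using h2
  intro S
  rw [main, main, Submodule.comap_map_eq_of_injective e.injective,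
    Submodule.orthogonal_orthogonal,
    Submodule.map_comap_eq_of_surjective e.surjective]
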